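/- arXiv:1706.00370 — 4 statements merged into one kernel-verified Lean document; each statement's English description precedes it below -/
import Mathlib

section
/- Let α ∈ (0, π/2), ν > 0, and let k₀ > 0 satisfy k₀ tanh k₀ = ν. Suppose φ : ℝ³ → ℝ is twice continuously differentiable on an open neighborhood of the closure of the layer W₁^(α), harmonic in W₁^(α) (Δφ = 0 there), and satisfies ∂φ/∂y(x, 0) = ν φ(x, 0) and ∂φ/∂y(x, −1) = 0 for every x ∈ F^(α). Then the function w(x) = ∫_{−1}^{0} φ(x, y) cosh(k₀(y + 1)) dy is twice continuously differentiable on F^(α) and satisfies the Helmholtz equation Δ_x w + k₀² w = 0 in F^(α), where Δ_x is the two-dimensional Laplacian in the variable x = (x₁, x₂). -/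
open MeasureTheory Real Set

noncomputable section

/-- The open plane sector `F^(α) = {x ∈ ℝ² : x₂ > -|x₁| tan α}`
whose vertex angle is `π + 2α`. -/
def Fsec (α : ℝ) : Set (ℝ × ℝ) := {x : ℝ × ℝ | x.2 > -|x.1| * Real.tan α}

/-- The sectorial water layer `W₁^(α) = F^(α) × (-1, 0)` of unit depth. -/
def W1 (α : ℝ) : Set ((ℝ × ℝ) × ℝ) := (Fsec α) ×ˢ Ioo (-1 : ℝ) 0

/-- The two-dimensional Laplacian of `w : ℝ × ℝ → ℝ`. -/
def lap2 (w : ℝ × ℝ → ℝ) (x : ℝ × ℝ) : ℝ :=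
  deriv (deriv (fun t => w (t, x.2))) x.1 + deriv (deriv (fun t => w (x.1, t))) x.2

/-- The three-dimensional Laplacian of `φ : (ℝ × ℝ) × ℝ → ℝ`,
points being written `(x, y)` with `x ∈ ℝ²`, `y ∈ ℝ`. -/
def lap3 (φ : (ℝ × ℝ) × ℝ → ℝ) (p : (ℝ × ℝ) × ℝ) : ℝ :=
  deriv (deriv (fun t => φ ((t, p.1.2), p.2))) p.1.1
    + deriv (deriv (fun t => φ ((p.1.1, t), p.2))) p.1.2
    + deriv (deriv (fun t => φ (p.1, t))) p.2

/-- The partial derivative `∂φ/∂y`. -/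
def dY (φ : (ℝ × ℝ) × ℝ → ℝ) (p : (ℝ × ℝ) × ℝ) : ℝ :=
  deriv (fun t => φ (p.1, t)) p.2

/-- `|∇φ|²`, the squared euclidean norm of the three-dimensional gradient of `φ`. -/
def gradSq (φ : (ℝ × ℝ) × ℝ → ℝ) (p : (ℝ × ℝ) × ℝ) : ℝ :=
  (deriv (fun t => φ ((t, p.1.2), p.2)) p.1.1) ^ 2
    + (deriv (fun t => φ ((p.1.1, t), p.2)) p.1.2) ^ 2
    + (deriv (fun t => φ (p.1, t)) p.2) ^ 2

section Aux

set_option linter.unusedSectionVars false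

variable {H : Type*} [NormedAddCommGroup H] [NormedSpace ℝ H]
variable {E : Type*} [NormedAddCommGroup E] [NormedSpace ℝ E]

def pfst (F : H × ℝ → E) (p : H × ℝ) : H →L[ℝ] E :=
  (fderiv ℝ F p).comp (ContinuousLinearMap.inl ℝ H ℝ)

theorem hasFDerivAt_pfst {F : H × ℝ → E} {V : Set (H × ℝ)} {n : WithTop ℕ∞}
    (hV : IsOpen V) (hF : ContDiffOn ℝ n F V) (hn : 1 ≤ n) {p : H × ℝ} (hp : p ∈ V) :
    HasFDerivAt (fun x => F (x, p.2)) (pfst F p) p.1 := by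
  have hd : HasFDerivAt F (fderiv ℝ F p) p :=
    ((hF.differentiableOn (ne_of_gt (lt_of_lt_of_le zero_lt_one hn))).differentiableAt (hV.mem_nhds hp)).hasFDerivAt
  exact hd.comp p.1 (hasFDerivAt_prodMk_left p.1 p.2)

theorem contDiffOn_pfst {F : H × ℝ → E} {V : Set (H × ℝ)} {n : WithTop ℕ∞}
    (hV : IsOpen V) (hF : ContDiffOn ℝ (n + 1) F V) :
    ContDiffOn ℝ n (pfst F) V := by
  have h1 : ContDiffOn ℝ n (fderiv ℝ F) V := hF.fderiv_of_isOpen hV le_rfl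
  have h2 : ContDiff ℝ n (fun L : (H × ℝ) →L[ℝ] E => L.comp (ContinuousLinearMap.inl ℝ H ℝ)) :=
    ((ContinuousLinearMap.compL ℝ H (H × ℝ) E).flip (ContinuousLinearMap.inl ℝ H ℝ)).contDiff
  exact (h2.comp_contDiffOn h1).congr fun p _ => rfl

variable [FiniteDimensional ℝ H]

theorem sliceContOn {F : H × ℝ → E} {V : Set (H × ℝ)} (hFc : ContinuousOn F V)
    {s : Set H} {a b : ℝ} (hsub : s ×ˢ Icc a b ⊆ V) {x : H} (hx : x ∈ s) :
    ContinuousOn (fun y => F (x, y)) (Icc a b) := by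
  apply hFc.comp (Continuous.continuousOn (by fun_prop))
  exact fun y hy => hsub ⟨hx, hy⟩

theorem hasFDerivAt_parametric [CompleteSpace E] {F : H × ℝ → E} {V : Set (H × ℝ)}
    (hV : IsOpen V) (hF : ContDiffOn ℝ 1 F V) {s : Set H} (hs : IsOpen s) {a b : ℝ}
    (hab : a ≤ b) (hsub : s ×ˢ Icc a b ⊆ V) {x₀ : H} (hx₀ : x₀ ∈ s) :
    HasFDerivAt (fun x => ∫ y in a..b, F (x, y))
      (∫ y in a..b, pfst F (x₀, y)) x₀ := by
  obtain ⟨ε, hε, hball⟩ := Metric.isOpen_iff.1 hs x₀ hx₀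
  have hcb : Metric.closedBall x₀ (ε / 2) ⊆ s :=
    (Metric.closedBall_subset_ball (by linarith)).trans hball
  have hK : IsCompact (Metric.closedBall x₀ (ε / 2) ×ˢ Icc a b) :=
    (isCompact_closedBall _ _).prod isCompact_Icc
  have hKV : Metric.closedBall x₀ (ε / 2) ×ˢ Icc a b ⊆ V :=
    (Set.prod_mono hcb subset_rfl).trans hsub
  have hF'c : ContinuousOn (pfst F) V := by
    have : ContDiffOn ℝ 0 (pfst F) V := contDiffOn_pfst hV (by simpa using hF)
    exact this.continuousOn
  obtain ⟨C, hC⟩ := hK.exists_bound_of_continuousOn (hF'c.mono hKV)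
  have hIoc : Set.uIoc a b = Ioc a b := uIoc_of_le hab
  have hIccsub : Set.uIoc a b ⊆ Icc a b := by rw [hIoc]; exact Ioc_subset_Icc_self
  refine intervalIntegral.hasFDerivAt_integral_of_dominated_of_fderiv_le
    (F := fun x y => F (x, y)) (F' := fun x y => pfst F (x, y)) (bound := fun _ => C)
    (μ := volume) (a := a) (b := b) (x₀ := x₀) (Metric.ball_mem_nhds x₀ (show (0:ℝ) < ε / 2 by linarith))
    ?_ ?_ ?_ ?_ ?_ ?_
  · filter_upwards [hs.mem_nhds hx₀] with x hx
    rw [hIoc]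
    exact ((sliceContOn hF.continuousOn hsub hx).mono Ioc_subset_Icc_self).aestronglyMeasurable
      measurableSet_Ioc
  · apply ContinuousOn.intervalIntegrable
    rw [uIcc_of_le hab]
    exact sliceContOn hF.continuousOn hsub hx₀
  · rw [hIoc]
    exact ((sliceContOn hF'c hsub hx₀).mono Ioc_subset_Icc_self).aestronglyMeasurable
      measurableSet_Ioc
  · apply Filter.Eventually.of_forall
    intro y hy x hx
    exact hC _ ⟨Metric.ball_subset_closedBall hx, hIccsub hy⟩
  · exact intervalIntegrable_const
  · apply Filter.Eventually.of_forall
    intro y hy x hx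
    exact hasFDerivAt_pfst (p := (x, y)) hV hF le_rfl
      (hsub ⟨(Metric.ball_subset_closedBall.trans hcb) hx, hIccsub hy⟩)

theorem continuousOn_parametric {F : H × ℝ → E} {V : Set (H × ℝ)}
    (hV : IsOpen V) (hF : ContinuousOn F V) {s : Set H} (hs : IsOpen s) {a b : ℝ}
    (hab : a ≤ b) (hsub : s ×ˢ Icc a b ⊆ V) :
    ContinuousOn (fun x => ∫ y in a..b, F (x, y)) s := by
  intro x₀ hx₀
  obtain ⟨ε, hε, hball⟩ := Metric.isOpen_iff.1 hs x₀ hx₀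
  have hcb : Metric.closedBall x₀ (ε / 2) ⊆ s :=
    (Metric.closedBall_subset_ball (by linarith)).trans hball
  have hK : IsCompact (Metric.closedBall x₀ (ε / 2) ×ˢ Icc a b) :=
    (isCompact_closedBall _ _).prod isCompact_Icc
  have hKV : Metric.closedBall x₀ (ε / 2) ×ˢ Icc a b ⊆ V :=
    (Set.prod_mono hcb subset_rfl).trans hsub
  obtain ⟨C, hC⟩ := hK.exists_bound_of_continuousOn (hF.mono hKV)
  have hIoc : Set.uIoc a b = Ioc a b := uIoc_of_le hab
  have hIccsub : Set.uIoc a b ⊆ Icc a b := by rw [hIoc]; exact Ioc_subset_Icc_self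
  apply ContinuousAt.continuousWithinAt
  refine intervalIntegral.continuousAt_of_dominated_interval
    (F := fun x y => F (x, y)) (bound := fun _ => C) ?_ ?_ intervalIntegrable_const ?_
  · filter_upwards [hs.mem_nhds hx₀] with x hx
    rw [hIoc]
    exact ((sliceContOn hF hsub hx).mono Ioc_subset_Icc_self).aestronglyMeasurable
      measurableSet_Ioc
  · filter_upwards [Metric.closedBall_mem_nhds x₀ (show (0:ℝ) < ε/2 by linarith)] with x hx
    apply Filter.Eventually.of_forall
    intro y hy
    exact hC _ ⟨hx, hIccsub hy⟩
  · apply Filter.Eventually.of_forall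
    intro y hy
    have : ContinuousAt F (x₀, y) :=
      hF.continuousAt (hV.mem_nhds (hsub ⟨hx₀, hIccsub hy⟩))
    have h2 : ContinuousAt (fun x : H => (x, y)) x₀ := continuousAt_id.prodMk continuousAt_const
    exact ContinuousAt.comp (f := fun x : H => (x, y)) this h2

theorem contDiffOn_parametric {H : Type} [NormedAddCommGroup H] [NormedSpace ℝ H]
    [FiniteDimensional ℝ H] :
    ∀ (n : ℕ) {E : Type} [NormedAddCommGroup E] [NormedSpace ℝ E] [CompleteSpace E]
      {F : H × ℝ → E} {V : Set (H × ℝ)},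
      IsOpen V → ContDiffOn ℝ n F V → ∀ {s : Set H}, IsOpen s → ∀ {a b : ℝ}, a ≤ b →
      s ×ˢ Icc a b ⊆ V →
      ContDiffOn ℝ n (fun x => ∫ y in a..b, F (x, y)) s := by
  intro n
  induction n with
  | zero =>
    intro E _ _ _ F V hV hF s hs a b hab hsub
    rw [show ((0 : ℕ) : WithTop ℕ∞) = 0 from rfl, contDiffOn_zero]
    exact continuousOn_parametric hV hF.continuousOn hs hab hsub
  | succ n ih =>
    intro E _ _ _ F V hV hF s hs a b hab hsub
    have hF' : ContDiffOn ℝ ((n : WithTop ℕ∞) + 1) F V := by exact_mod_cast hF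
    have hdiff : ∀ x₀ ∈ s, HasFDerivAt (fun x => ∫ y in a..b, F (x, y))
        (∫ y in a..b, pfst F (x₀, y)) x₀ := by
      intro x₀ hx₀
      exact hasFDerivAt_parametric hV (hF'.of_le (by simpa using le_add_self)) hs hab hsub hx₀
    have hpfst : ContDiffOn ℝ n (pfst F) V := contDiffOn_pfst hV hF'
    have key : ContDiffOn ℝ n (fun x => ∫ y in a..b, pfst F (x, y)) s :=
      ih (F := pfst F) hV hpfst hs hab hsub
    rw [show ((n + 1 : ℕ) : WithTop ℕ∞) = (n : WithTop ℕ∞) + 1 by exact_mod_cast rfl,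
      contDiffOn_succ_iff_fderiv_of_isOpen hs]
    refine ⟨fun x hx => ((hdiff x hx).differentiableAt).differentiableWithinAt,
      by simp, ?_⟩
    exact key.congr fun x hx => (hdiff x hx).fderiv


/-- Partial derivative in the first variable for functions on `ℝ × ℝ`. -/
def dx1 {E : Type} [NormedAddCommGroup E] [NormedSpace ℝ E]
    (G : ℝ × ℝ → E) (p : ℝ × ℝ) : E :=
  deriv (fun t => G (t, p.2)) p.1

variable {E' : Type} [NormedAddCommGroup E'] [NormedSpace ℝ E']

theorem hasDerivAt_dx1 {G : ℝ × ℝ → E'} {V : Set (ℝ × ℝ)} {n : WithTop ℕ∞}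
    (hV : IsOpen V) (hG : ContDiffOn ℝ n G V) (hn : 1 ≤ n) {p : ℝ × ℝ} (hp : p ∈ V) :
    HasDerivAt (fun t => G (t, p.2)) (dx1 G p) p.1 := by
  have h := (hasFDerivAt_pfst hV hG hn hp).hasDerivAt
  have he : dx1 G p = pfst G p 1 := h.deriv
  rw [dx1] at he
  rw [← he] at h
  exact h

theorem contDiffOn_dx1 {G : ℝ × ℝ → E'} {V : Set (ℝ × ℝ)} {n : WithTop ℕ∞}
    (hV : IsOpen V) (hG : ContDiffOn ℝ (n + 1) G V) :
    ContDiffOn ℝ n (dx1 G) V := by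
  have h1 : ContDiffOn ℝ n (pfst G) V := contDiffOn_pfst hV hG
  have h2 := (ContinuousLinearMap.apply ℝ E' (1 : ℝ)).contDiff.comp_contDiffOn (n := n) h1
  apply h2.congr
  intro p hp
  exact ((hasFDerivAt_pfst hV (hG.of_le (by simpa using le_add_self)) le_rfl
    hp).hasDerivAt).deriv

theorem hasDerivAt_parametric1 [CompleteSpace E'] {G : ℝ × ℝ → E'} {V : Set (ℝ × ℝ)}
    (hV : IsOpen V) (hG : ContDiffOn ℝ 1 G V) {s : Set ℝ} (hs : IsOpen s) {a b : ℝ}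
    (hab : a ≤ b) (hsub : s ×ˢ Icc a b ⊆ V) {t₀ : ℝ} (ht₀ : t₀ ∈ s) :
    HasDerivAt (fun t => ∫ y in a..b, G (t, y))
      (∫ y in a..b, dx1 G (t₀, y)) t₀ := by
  obtain ⟨ε, hε, hball⟩ := Metric.isOpen_iff.1 hs t₀ ht₀
  have hcb : Metric.closedBall t₀ (ε / 2) ⊆ s :=
    (Metric.closedBall_subset_ball (by linarith)).trans hball
  have hK : IsCompact (Metric.closedBall t₀ (ε / 2) ×ˢ Icc a b) :=
    (isCompact_closedBall _ _).prod isCompact_Icc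
  have hKV : Metric.closedBall t₀ (ε / 2) ×ˢ Icc a b ⊆ V :=
    (Set.prod_mono hcb subset_rfl).trans hsub
  have hG'c : ContinuousOn (dx1 G) V :=
    (contDiffOn_dx1 (n := 0) hV (by simpa using hG)).continuousOn
  obtain ⟨C, hC⟩ := hK.exists_bound_of_continuousOn (hG'c.mono hKV)
  have hIoc : Set.uIoc a b = Ioc a b := uIoc_of_le hab
  have hIccsub : Set.uIoc a b ⊆ Icc a b := by rw [hIoc]; exact Ioc_subset_Icc_self
  have := intervalIntegral.hasDerivAt_integral_of_dominated_loc_of_deriv_le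
    (F := fun x y => G (x, y)) (F' := fun x y => dx1 G (x, y)) (bound := fun _ => C)
    (μ := volume) (a := a) (b := b) (x₀ := t₀) (Metric.ball_mem_nhds t₀ (show (0:ℝ) < ε / 2 by linarith))
    ?_ ?_ ?_ ?_ ?_ ?_
  · exact this.2
  · filter_upwards [hs.mem_nhds ht₀] with x hx
    rw [hIoc]
    exact ((sliceContOn hG.continuousOn hsub hx).mono Ioc_subset_Icc_self).aestronglyMeasurable
      measurableSet_Ioc
  · apply ContinuousOn.intervalIntegrable
    rw [uIcc_of_le hab]
    exact sliceContOn hG.continuousOn hsub ht₀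
  · rw [hIoc]
    exact ((sliceContOn hG'c hsub ht₀).mono Ioc_subset_Icc_self).aestronglyMeasurable
      measurableSet_Ioc
  · apply Filter.Eventually.of_forall
    intro y hy x hx
    exact hC _ ⟨Metric.ball_subset_closedBall hx, hIccsub hy⟩
  · exact intervalIntegrable_const
  · apply Filter.Eventually.of_forall
    intro y hy x hx
    exact hasDerivAt_dx1 (p := (x, y)) hV hG le_rfl
      (hsub ⟨(Metric.ball_subset_closedBall.trans hcb) hx, hIccsub hy⟩)

theorem second_deriv_parametric {G : ℝ × ℝ → ℝ} {V : Set (ℝ × ℝ)}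
    (hV : IsOpen V) (hG : ContDiffOn ℝ 2 G V) {s : Set ℝ} (hs : IsOpen s) {a b : ℝ}
    (hab : a ≤ b) (hsub : s ×ˢ Icc a b ⊆ V) {t₀ : ℝ} (ht₀ : t₀ ∈ s) :
    deriv (deriv (fun t => ∫ y in a..b, G (t, y))) t₀
      = ∫ y in a..b, dx1 (dx1 G) (t₀, y) := by
  have h1 : ∀ t ∈ s, HasDerivAt (fun t => ∫ y in a..b, G (t, y))
      (∫ y in a..b, dx1 G (t, y)) t := fun t ht =>
    hasDerivAt_parametric1 hV (hG.of_le one_le_two) hs hab hsub ht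
  have hdx1 : ContDiffOn ℝ 1 (dx1 G) V :=
    contDiffOn_dx1 hV (by rw [one_add_one_eq_two]; exact hG)
  have h2 : HasDerivAt (fun t => ∫ y in a..b, dx1 G (t, y))
      (∫ y in a..b, dx1 (dx1 G) (t₀, y)) t₀ :=
    hasDerivAt_parametric1 hV hdx1 hs hab hsub ht₀
  have heq : deriv (fun t => ∫ y in a..b, G (t, y))
      =ᶠ[nhds t₀] fun t => ∫ y in a..b, dx1 G (t, y) := by
    filter_upwards [hs.mem_nhds ht₀] with t ht
    exact (h1 t ht).deriv
  rw [heq.deriv_eq]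
  exact h2.deriv


theorem dx1_mul_right (g : ℝ × ℝ → ℝ) (c : ℝ → ℝ) (p : ℝ × ℝ) :
    dx1 (fun q => g q * c q.2) p = dx1 g p * c p.2 := by
  show deriv (fun t => g (t, p.2) * c p.2) p.1 = deriv (fun t => g (t, p.2)) p.1 * c p.2
  exact deriv_mul_const_field _

theorem dx1_dx1_mul_right (g : ℝ × ℝ → ℝ) (c : ℝ → ℝ) (p : ℝ × ℝ) :
    dx1 (dx1 (fun q => g q * c q.2)) p = dx1 (dx1 g) p * c p.2 := by
  have e1 : (fun t => dx1 (fun q => g q * c q.2) (t, p.2))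
      = fun t => dx1 g (t, p.2) * c p.2 := funext fun t => dx1_mul_right g c (t, p.2)
  show deriv (fun t => dx1 (fun q => g q * c q.2) (t, p.2)) p.1 = _
  rw [e1]
  exact deriv_mul_const_field _

theorem line_second_deriv (f : ℝ → ℝ → ℝ) (c : ℝ → ℝ) {V : Set (ℝ × ℝ)} (hV : IsOpen V)
    (hfc : ContDiffOn ℝ 2 (fun p : ℝ × ℝ => f p.1 p.2 * c p.2) V)
    {s : Set ℝ} (hs : IsOpen s) (hsub : s ×ˢ Icc (-1 : ℝ) 0 ⊆ V) {t₀ : ℝ} (ht₀ : t₀ ∈ s) :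
    deriv (deriv (fun t => ∫ y in (-1 : ℝ)..0, f t y * c y)) t₀
        = ∫ y in (-1 : ℝ)..0, deriv (deriv (fun t => f t y)) t₀ * c y
      ∧ IntervalIntegrable (fun y => deriv (deriv (fun t => f t y)) t₀ * c y)
          volume (-1 : ℝ) 0 := by
  have key := second_deriv_parametric hV hfc hs (by norm_num) hsub ht₀
  have hfe : (fun y => deriv (deriv (fun t => f t y)) t₀ * c y)
      = fun y => dx1 (dx1 (fun p : ℝ × ℝ => f p.1 p.2 * c p.2)) (t₀, y) :=
    funext fun y => (dx1_dx1_mul_right (fun p => f p.1 p.2) c (t₀, y)).symm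
  constructor
  · rw [hfe]
    exact key
  · rw [hfe]
    have c1 : ContDiffOn ℝ 1 (dx1 (fun p : ℝ × ℝ => f p.1 p.2 * c p.2)) V :=
      contDiffOn_dx1 hV (by rw [one_add_one_eq_two]; exact hfc)
    have c2 : ContDiffOn ℝ 0 (dx1 (dx1 (fun p : ℝ × ℝ => f p.1 p.2 * c p.2))) V :=
      contDiffOn_dx1 hV (by simpa using c1)
    have hc : ContinuousOn (fun y => dx1 (dx1 (fun p : ℝ × ℝ => f p.1 p.2 * c p.2)) (t₀, y))
        (Icc (-1 : ℝ) 0) := sliceContOn c2.continuousOn hsub ht₀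
    apply ContinuousOn.intervalIntegrable
    rw [uIcc_of_le (by norm_num : (-1:ℝ) ≤ 0)]
    exact hc

end Aux


/-- John's auxiliary function `w(x) = ∫_{-1}^0 φ(x,y) cosh(k₀(y+1)) dy`
is twice continuously differentiable on `F^(α)` and satisfies the Helmholtz equation
`Δₓw + k₀²w = 0` there. -/
theorem aux_function_satisfies_helmholtz
    (α : ℝ) (hα : α ∈ Ioo 0 (π / 2)) (ν k₀ : ℝ) (hν : 0 < ν) (hk₀ : 0 < k₀)
    (hroot : k₀ * Real.tanh k₀ = ν)
    (φ : (ℝ × ℝ) × ℝ → ℝ)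
    (hsmooth : ∃ U : Set ((ℝ × ℝ) × ℝ), IsOpen U ∧ closure (W1 α) ⊆ U ∧ ContDiffOn ℝ 2 φ U)
    (hharm : ∀ p ∈ W1 α, lap3 φ p = 0)
    (hfs : ∀ x ∈ Fsec α, deriv (fun t => φ (x, t)) 0 = ν * φ (x, 0))
    (hbot : ∀ x ∈ Fsec α, deriv (fun t => φ (x, t)) (-1) = 0) :
    ContDiffOn ℝ 2
        (fun x : ℝ × ℝ => ∫ y in Ioo (-1 : ℝ) 0, φ (x, y) * Real.cosh (k₀ * (y + 1)))
        (Fsec α) ∧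
    ∀ x ∈ Fsec α,
      lap2 (fun x : ℝ × ℝ => ∫ y in Ioo (-1 : ℝ) 0, φ (x, y) * Real.cosh (k₀ * (y + 1))) x
        + k₀ ^ 2 * (∫ y in Ioo (-1 : ℝ) 0, φ (x, y) * Real.cosh (k₀ * (y + 1))) = 0 := by
  obtain ⟨U, hUopen, hUsub, hUsm⟩ := hsmooth
  have hFopen : IsOpen (Fsec α) := by
    have e : Fsec α = {x : ℝ × ℝ | -|x.1| * Real.tan α < x.2} := rfl
    rw [e]
    exact isOpen_lt (((continuous_fst.abs).neg).mul continuous_const) continuous_snd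
  have hsubU : Fsec α ×ˢ Icc (-1 : ℝ) 0 ⊆ U := by
    refine subset_trans ?_ hUsub
    rw [W1, closure_prod_eq, closure_Ioo (by norm_num : (-1:ℝ) ≠ 0)]
    exact Set.prod_mono subset_closure subset_rfl
  have hΦ : ContDiffOn ℝ 2 (fun p : (ℝ × ℝ) × ℝ => φ p * Real.cosh (k₀ * (p.2 + 1))) U := by
    apply hUsm.mul
    apply ContDiff.contDiffOn
    exact Real.contDiff_cosh.comp (contDiff_const.mul (contDiff_snd.add contDiff_const))
  have hw_eq : ∀ x : ℝ × ℝ, (∫ y in Ioo (-1 : ℝ) 0, φ (x, y) * Real.cosh (k₀ * (y + 1)))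
      = ∫ y in (-1 : ℝ)..0, φ (x, y) * Real.cosh (k₀ * (y + 1)) := by
    intro x
    rw [intervalIntegral.integral_of_le (by norm_num : (-1:ℝ) ≤ 0),
      integral_Ioc_eq_integral_Ioo]
  constructor
  · simp only [hw_eq]
    have h := contDiffOn_parametric (H := ℝ × ℝ) 2
      (F := fun p : (ℝ × ℝ) × ℝ => φ p * Real.cosh (k₀ * (p.2 + 1)))
      hUopen (by exact_mod_cast hΦ) hFopen (by norm_num) hsubU
    have h' : ContDiffOn ℝ ((2:ℕ) : WithTop ℕ∞)
        (fun x : ℝ × ℝ => ∫ y in (-1:ℝ)..0, φ (x, y) * Real.cosh (k₀ * (y + 1)))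
        (Fsec α) := h
    exact_mod_cast h'
  · intro x hx
    obtain ⟨a₁, a₂⟩ := x
    simp only [hw_eq, lap2]
    have hV1 : IsOpen ((fun p : ℝ × ℝ => ((p.1, a₂), p.2)) ⁻¹' U) :=
      hUopen.preimage (by fun_prop)
    have hj1 : ContDiff ℝ 2 (fun p : ℝ × ℝ => ((p.1, a₂), p.2)) := by fun_prop
    have hG1 : ContDiffOn ℝ 2
        (fun p : ℝ × ℝ => φ ((p.1, a₂), p.2) * Real.cosh (k₀ * (p.2 + 1)))
        ((fun p : ℝ × ℝ => ((p.1, a₂), p.2)) ⁻¹' U) :=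
      (hΦ.comp hj1.contDiffOn fun p hp => hp).congr fun p hp => rfl
    have hs1 : IsOpen {t : ℝ | (t, a₂) ∈ Fsec α} :=
      hFopen.preimage (by fun_prop)
    have hsub1 : {t : ℝ | (t, a₂) ∈ Fsec α} ×ˢ Icc (-1:ℝ) 0
        ⊆ (fun p : ℝ × ℝ => ((p.1, a₂), p.2)) ⁻¹' U := fun p hp => hsubU ⟨hp.1, hp.2⟩
    have hx1 : a₁ ∈ {t : ℝ | (t, a₂) ∈ Fsec α} := hx
    have hline1 := line_second_deriv (fun t y => φ ((t, a₂), y))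
      (fun y => Real.cosh (k₀ * (y + 1))) hV1 hG1 hs1 hsub1 hx1
    have hV2 : IsOpen ((fun p : ℝ × ℝ => ((a₁, p.1), p.2)) ⁻¹' U) :=
      hUopen.preimage (by fun_prop)
    have hj2 : ContDiff ℝ 2 (fun p : ℝ × ℝ => ((a₁, p.1), p.2)) := by fun_prop
    have hG2 : ContDiffOn ℝ 2
        (fun p : ℝ × ℝ => φ ((a₁, p.1), p.2) * Real.cosh (k₀ * (p.2 + 1)))
        ((fun p : ℝ × ℝ => ((a₁, p.1), p.2)) ⁻¹' U) :=
      (hΦ.comp hj2.contDiffOn fun p hp => hp).congr fun p hp => rfl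
    have hs2 : IsOpen {t : ℝ | (a₁, t) ∈ Fsec α} :=
      hFopen.preimage (by fun_prop)
    have hsub2 : {t : ℝ | (a₁, t) ∈ Fsec α} ×ˢ Icc (-1:ℝ) 0
        ⊆ (fun p : ℝ × ℝ => ((a₁, p.1), p.2)) ⁻¹' U := fun p hp => hsubU ⟨hp.1, hp.2⟩
    have hx2 : a₂ ∈ {t : ℝ | (a₁, t) ∈ Fsec α} := hx
    have hline2 := line_second_deriv (fun t y => φ ((a₁, t), y))
      (fun y => Real.cosh (k₀ * (y + 1))) hV2 hG2 hs2 hsub2 hx2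
    obtain ⟨hline1a, hline1b⟩ := hline1
    obtain ⟨hline2a, hline2b⟩ := hline2
    beta_reduce at hline1a hline1b hline2a hline2b
    rw [hline1a, hline2a, ← intervalIntegral.integral_add hline1b hline2b]
    have h0 : ∀ᵐ y : ℝ, y ≠ (0:ℝ) := by
      rw [MeasureTheory.ae_iff]
      simp only [not_not, Set.setOf_eq_eq_singleton]
      exact Real.volume_singleton
    have hsum : (∫ y in (-1:ℝ)..0,
          (deriv (deriv (fun t => φ ((t, a₂), y))) a₁ * Real.cosh (k₀ * (y + 1))
            + deriv (deriv (fun t => φ ((a₁, t), y))) a₂ * Real.cosh (k₀ * (y + 1))))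
        = ∫ y in (-1:ℝ)..0,
            -(Real.cosh (k₀ * (y + 1)) * deriv (deriv (fun t => φ ((a₁, a₂), t))) y) := by
      apply intervalIntegral.integral_congr_ae
      filter_upwards [h0] with y hy0 hyI
      rw [uIoc_of_le (by norm_num : (-1:ℝ) ≤ 0)] at hyI
      have hyIoo : y ∈ Ioo (-1:ℝ) 0 := ⟨hyI.1, lt_of_le_of_ne hyI.2 hy0⟩
      have hh := hharm ((a₁, a₂), y) (Set.mem_prod.mpr ⟨hx, hyIoo⟩)
      simp only [lap3] at hh
      linear_combination Real.cosh (k₀ * (y + 1)) * hh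
    rw [hsum, intervalIntegral.integral_neg]
    -- integration by parts
    have hVy : IsOpen {y : ℝ | ((a₁, a₂), y) ∈ U} := hUopen.preimage (by fun_prop)
    have hIccy : Icc (-1:ℝ) 0 ⊆ {y : ℝ | ((a₁, a₂), y) ∈ U} := fun y hy => hsubU ⟨hx, hy⟩
    have hψ : ContDiffOn ℝ 2 (fun t => φ ((a₁, a₂), t)) {y : ℝ | ((a₁, a₂), y) ∈ U} :=
      hUsm.comp (ContDiff.contDiffOn (by fun_prop)) fun y hy => hy
    have hψ1 : ContDiffOn ℝ 1 (deriv (fun t => φ ((a₁, a₂), t)))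
        {y : ℝ | ((a₁, a₂), y) ∈ U} := hψ.deriv_of_isOpen hVy (by norm_num)
    have hd1 : ∀ y ∈ Set.uIcc (-1:ℝ) 0, HasDerivAt (fun t => φ ((a₁, a₂), t))
        (deriv (fun t => φ ((a₁, a₂), t)) y) y := by
      intro y hy
      rw [uIcc_of_le (by norm_num : (-1:ℝ) ≤ 0)] at hy
      exact ((hψ.differentiableOn (by norm_num)).differentiableAt
        (hVy.mem_nhds (hIccy hy))).hasDerivAt
    have hd2 : ∀ y ∈ Set.uIcc (-1:ℝ) 0, HasDerivAt (deriv (fun t => φ ((a₁, a₂), t)))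
        (deriv (deriv (fun t => φ ((a₁, a₂), t))) y) y := by
      intro y hy
      rw [uIcc_of_le (by norm_num : (-1:ℝ) ≤ 0)] at hy
      exact ((hψ1.differentiableOn (by norm_num)).differentiableAt
        (hVy.mem_nhds (hIccy hy))).hasDerivAt
    have hk0lin : ∀ y : ℝ, HasDerivAt (fun z : ℝ => k₀ * (z + 1)) k₀ y := by
      intro y
      simpa using ((hasDerivAt_id y).add_const (1:ℝ)).const_mul k₀
    have hch : ∀ y : ℝ, HasDerivAt (fun z => Real.cosh (k₀ * (z + 1)))
        (k₀ * Real.sinh (k₀ * (y + 1))) y := by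
      intro y
      have h := (Real.hasDerivAt_cosh (k₀ * (y + 1))).comp y (hk0lin y)
      simpa [mul_comm, Function.comp_def] using h
    have hsh : ∀ y : ℝ, HasDerivAt (fun z => k₀ * Real.sinh (k₀ * (z + 1)))
        (k₀ ^ 2 * Real.cosh (k₀ * (y + 1))) y := by
      intro y
      have h := ((Real.hasDerivAt_sinh (k₀ * (y + 1))).comp y (hk0lin y)).const_mul k₀
      exact h.congr_deriv (by ring)
    have hIψ' : IntervalIntegrable (deriv (fun t => φ ((a₁, a₂), t))) volume (-1:ℝ) 0 := by
      apply ContinuousOn.intervalIntegrable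
      rw [uIcc_of_le (by norm_num : (-1:ℝ) ≤ 0)]
      exact (hψ1.continuousOn).mono hIccy
    have hIψ'' : IntervalIntegrable (deriv (deriv (fun t => φ ((a₁, a₂), t))))
        volume (-1:ℝ) 0 := by
      apply ContinuousOn.intervalIntegrable
      rw [uIcc_of_le (by norm_num : (-1:ℝ) ≤ 0)]
      exact (hψ1.continuousOn_deriv_of_isOpen hVy le_rfl).mono hIccy
    have hIBP1 := intervalIntegral.integral_mul_deriv_eq_deriv_mul
      (u := fun y => Real.cosh (k₀ * (y + 1))) (u' := fun y => k₀ * Real.sinh (k₀ * (y + 1)))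
      (v := deriv (fun t => φ ((a₁, a₂), t)))
      (v' := deriv (deriv (fun t => φ ((a₁, a₂), t))))
      (fun y _ => hch y) hd2 (Continuous.intervalIntegrable (by fun_prop) _ _) hIψ''
    have hIBP2 := intervalIntegral.integral_mul_deriv_eq_deriv_mul
      (u := fun y => k₀ * Real.sinh (k₀ * (y + 1)))
      (u' := fun y => k₀ ^ 2 * Real.cosh (k₀ * (y + 1)))
      (v := fun t => φ ((a₁, a₂), t)) (v' := deriv (fun t => φ ((a₁, a₂), t)))
      (fun y _ => hsh y) hd1 (Continuous.intervalIntegrable (by fun_prop) _ _) hIψ'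
    beta_reduce at hIBP1 hIBP2
    rw [hIBP1, hIBP2]
    have htail : (∫ y in (-1:ℝ)..0, (k₀ ^ 2 * Real.cosh (k₀ * (y + 1))) * φ ((a₁, a₂), y))
        = k₀ ^ 2 * ∫ y in (-1:ℝ)..0, φ ((a₁, a₂), y) * Real.cosh (k₀ * (y + 1)) := by
      rw [← intervalIntegral.integral_const_mul]
      apply intervalIntegral.integral_congr
      intro y _
      ring
    rw [htail, hfs (a₁, a₂) hx, hbot (a₁, a₂) hx]
    have e0 : k₀ * (0 + 1) = k₀ := by ring
    have e1 : k₀ * (-1 + 1) = 0 := by ring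
    rw [e0, e1, Real.cosh_zero, Real.sinh_zero]
    have hvc : ν * Real.cosh k₀ = k₀ * Real.sinh k₀ := by
      rw [← hroot, Real.tanh_eq_sinh_div_cosh]
      field_simp
    linear_combination (-(φ ((a₁, a₂), 0))) * hvc
end
end

section
/- Let ν > 0 and let k₀ > 0 satisfy k₀ tanh k₀ = ν. If f : [−1, 0] → ℝ is continuously differentiable and ∫_{−1}^{0} f(y) cosh(k₀(y + 1)) dy = 0, then |f(0)|² sinh² k₀ ≤ (1/2) (sinh² k₀ / ν − 1) ∫_{−1}^{0} |f'(y)|² dy; in particular ν |f(0)|² ≤ (1/2) ∫_{−1}^{0} |f'(y)|² dy. (Here one uses that ∫_{−1}^{0} sinh²(k₀(y + 1)) dy = (1/2)(sinh² k₀ / ν − 1).) -/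
open MeasureTheory Real Set

noncomputable section

/-- Cauchy–Schwarz inequality for set integrals of real functions. -/
lemma cs_aux (s : Set ℝ) (hs : MeasurableSet s) (u v : ℝ → ℝ)
    (hu : IntegrableOn (fun y => u y ^ 2) s) (hv : IntegrableOn (fun y => v y ^ 2) s)
    (huv : IntegrableOn (fun y => u y * v y) s) :
    (∫ y in s, u y * v y) ^ 2 ≤ (∫ y in s, u y ^ 2) * ∫ y in s, v y ^ 2 := by
  set A := ∫ y in s, u y ^ 2 with hA
  set B := ∫ y in s, u y * v y with hB
  set C := ∫ y in s, v y ^ 2 with hC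
  have hCnn : 0 ≤ C := setIntegral_nonneg hs fun y _ => sq_nonneg _
  rcases hCnn.eq_or_lt with hC0 | hCpos
  · have hv0 : (fun y => v y ^ 2) =ᵐ[volume.restrict s] 0 := by
      exact (integral_eq_zero_iff_of_nonneg (fun y => sq_nonneg (v y)) hv).mp hC0.symm
    have huv0 : (fun y => u y * v y) =ᵐ[volume.restrict s] 0 := by
      filter_upwards [hv0] with y hy
      have : v y = 0 := by simpa [pow_eq_zero_iff] using hy
      simp [this]
    have hB0 : B = 0 := by rw [hB]; exact integral_eq_zero_of_ae huv0
    have hAnn : 0 ≤ A := setIntegral_nonneg hs fun y _ => sq_nonneg _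
    nlinarith
  · have hfun : (fun y => (C * u y - B * v y) ^ 2)
        = fun y => C ^ 2 * u y ^ 2 - 2 * C * B * (u y * v y) + B ^ 2 * v y ^ 2 := by
      funext y; ring
    have hexp : ∫ y in s, (C * u y - B * v y) ^ 2
        = C ^ 2 * A - 2 * C * B * B + B ^ 2 * C := by
      have h2 : ∫ y in s, (C ^ 2 * u y ^ 2 - 2 * C * B * (u y * v y))
          = C ^ 2 * A - 2 * C * B * B := by
        rw [integral_sub (hu.const_mul _) (huv.const_mul _), integral_const_mul,
          integral_const_mul]
      have h1 : ∫ y in s, (C ^ 2 * u y ^ 2 - 2 * C * B * (u y * v y) + B ^ 2 * v y ^ 2)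
          = (∫ y in s, (C ^ 2 * u y ^ 2 - 2 * C * B * (u y * v y)))
            + ∫ y in s, B ^ 2 * v y ^ 2 :=
        integral_add ((hu.const_mul _).sub (huv.const_mul _)) (hv.const_mul _)
      rw [hfun, h1, h2, integral_const_mul]
    have hpos : 0 ≤ ∫ y in s, (C * u y - B * v y) ^ 2 :=
      setIntegral_nonneg hs fun y _ => sq_nonneg _
    nlinarith

/-- if `k₀ tanh k₀ = ν`, `f` is `C¹` on `[-1,0]` and
`∫_{-1}^0 f(y) cosh(k₀(y+1)) dy = 0`, then
`|f(0)|² sinh² k₀ ≤ (1/2)(sinh² k₀/ν - 1) ∫ |f'|²`; in particular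
`ν |f(0)|² ≤ (1/2) ∫ |f'|²`. -/
theorem pointwise_trace_bound (ν k₀ : ℝ) (hν : 0 < ν) (hk₀ : 0 < k₀)
    (hroot : k₀ * Real.tanh k₀ = ν) (f : ℝ → ℝ)
    (hf : ContDiffOn ℝ 1 f (Icc (-1 : ℝ) 0))
    (h0 : ∫ y in Ioo (-1 : ℝ) 0, f y * Real.cosh (k₀ * (y + 1)) = 0) :
    (f 0) ^ 2 * (Real.sinh k₀) ^ 2
      ≤ (1 / 2) * ((Real.sinh k₀) ^ 2 / ν - 1) * ∫ y in Ioo (-1 : ℝ) 0, (deriv f y) ^ 2 ∧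
    ν * (f 0) ^ 2 ≤ (1 / 2) * ∫ y in Ioo (-1 : ℝ) 0, (deriv f y) ^ 2 := by
  have hk0 : k₀ ≠ 0 := hk₀.ne'
  have hsinh : 0 < Real.sinh k₀ := Real.sinh_pos_iff.2 hk₀
  have hle : (-1 : ℝ) ≤ 0 := by norm_num
  have huniq : UniqueDiffOn ℝ (Icc (-1 : ℝ) 0) := uniqueDiffOn_Icc (by norm_num)
  set g := fun y => derivWithin f (Icc (-1 : ℝ) 0) y with hgdef
  have hgc : ContinuousOn g (Icc (-1 : ℝ) 0) := hf.continuousOn_derivWithin huniq le_rfl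
  have hmem : ∀ y ∈ Ioo (-1 : ℝ) 0, Icc (-1 : ℝ) 0 ∈ nhds y := fun y hy =>
    Icc_mem_nhds hy.1 hy.2
  have hdiff : ∀ y ∈ Ioo (-1 : ℝ) 0, HasDerivAt f (g y) y := by
    intro y hy
    have hd : DifferentiableAt ℝ f y :=
      (hf.differentiableOn one_ne_zero y (Ioo_subset_Icc_self hy)).differentiableAt (hmem y hy)
    have : g y = deriv f y := derivWithin_of_mem_nhds (hmem y hy)
    rw [this]; exact hd.hasDerivAt
  have hgd : ∀ y ∈ Ioo (-1 : ℝ) 0, deriv f y = g y := fun y hy =>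
    (derivWithin_of_mem_nhds (hmem y hy)).symm
  have hlin : ∀ y : ℝ, HasDerivAt (fun t => k₀ * (t + 1)) k₀ y := by
    intro y
    simpa using ((hasDerivAt_id y).add_const 1).const_mul k₀
  have hs' : ∀ y : ℝ, HasDerivAt (fun t => Real.sinh (k₀ * (t + 1)))
      (Real.cosh (k₀ * (y + 1)) * k₀) y := fun y =>
    (Real.hasDerivAt_sinh _).comp y (hlin y)
  have hsc : Continuous (fun t => Real.sinh (k₀ * (t + 1))) :=
    Real.continuous_sinh.comp (by fun_prop)
  have hcc : Continuous (fun t => Real.cosh (k₀ * (t + 1))) :=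
    Real.continuous_cosh.comp (by fun_prop)
  have hint1 : IntegrableOn (fun y => g y * Real.sinh (k₀ * (y + 1))) (Ioo (-1 : ℝ) 0) :=
    ((hgc.mul hsc.continuousOn).integrableOn_Icc).mono_set Ioo_subset_Icc_self
  have hint2 : IntegrableOn (fun y => f y * Real.cosh (k₀ * (y + 1))) (Ioo (-1 : ℝ) 0) :=
    ((hf.continuousOn.mul hcc.continuousOn).integrableOn_Icc).mono_set Ioo_subset_Icc_self
  have hintg2 : IntegrableOn (fun y => g y ^ 2) (Ioo (-1 : ℝ) 0) :=
    ((hgc.pow 2).integrableOn_Icc).mono_set Ioo_subset_Icc_self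
  have hints2 : IntegrableOn (fun y => (Real.sinh (k₀ * (y + 1))) ^ 2) (Ioo (-1 : ℝ) 0) :=
    (((hsc.pow 2).continuousOn).integrableOn_Icc).mono_set Ioo_subset_Icc_self
  -- FTC : boundary term
  have key : f 0 * Real.sinh k₀ = ∫ y in Ioo (-1 : ℝ) 0, g y * Real.sinh (k₀ * (y + 1)) := by
    have hFc : ContinuousOn (fun y => f y * Real.sinh (k₀ * (y + 1))) (Icc (-1 : ℝ) 0) :=
      hf.continuousOn.mul hsc.continuousOn
    have hF' : ∀ y ∈ Ioo (-1 : ℝ) 0,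
        HasDerivWithinAt (fun y => f y * Real.sinh (k₀ * (y + 1)))
          (g y * Real.sinh (k₀ * (y + 1)) + k₀ * (f y * Real.cosh (k₀ * (y + 1))))
          (Ioi y) y := by
      intro y hy
      have := (hdiff y hy).mul (hs' y)
      have h2 : g y * Real.sinh (k₀ * (y + 1)) + f y * (Real.cosh (k₀ * (y + 1)) * k₀)
          = g y * Real.sinh (k₀ * (y + 1)) + k₀ * (f y * Real.cosh (k₀ * (y + 1))) := by ring
      rw [h2] at this
      exact this.hasDerivWithinAt
    have hFint : IntervalIntegrable
        (fun y => g y * Real.sinh (k₀ * (y + 1)) + k₀ * (f y * Real.cosh (k₀ * (y + 1))))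
        volume (-1 : ℝ) 0 := by
      apply ContinuousOn.intervalIntegrable
      rw [uIcc_of_le hle]
      exact (hgc.mul hsc.continuousOn).add
        ((continuousOn_const.mul (hf.continuousOn.mul hcc.continuousOn)))
    have hFTC := intervalIntegral.integral_eq_sub_of_hasDeriv_right_of_le hle hFc hF' hFint
    rw [intervalIntegral.integral_of_le hle, MeasureTheory.integral_Ioc_eq_integral_Ioo] at hFTC
    rw [integral_add hint1 (hint2.const_mul k₀), integral_const_mul, h0] at hFTC
    norm_num at hFTC
    rw [hFTC]
  -- the weight integral
  have hS : ∫ y in Ioo (-1 : ℝ) 0, (Real.sinh (k₀ * (y + 1))) ^ 2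
      = (1 / 2) * ((Real.sinh k₀) ^ 2 / ν - 1) := by
    have anti : ∀ y : ℝ, HasDerivAt
        (fun t => Real.sinh (k₀ * (t + 1)) * Real.cosh (k₀ * (t + 1)) / (2 * k₀) - t / 2)
        ((Real.sinh (k₀ * (y + 1))) ^ 2) y := by
      intro y
      have hs := (Real.hasDerivAt_sinh _).comp y (hlin y)
      have hc := (Real.hasDerivAt_cosh _).comp y (hlin y)
      have := ((hs.mul hc).div_const (2 * k₀)).sub ((hasDerivAt_id y).div_const 2)
      refine this.congr_deriv ?_
      simp only [Function.comp_apply]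
      have hcs := Real.cosh_sq (k₀ * (y + 1))
      have hkk : k₀ * k₀⁻¹ = 1 := mul_inv_cancel₀ hk0
      linear_combination (k₀ * k₀⁻¹ / 2 : ℝ) * hcs
        + ((2 * Real.sinh (k₀ * (y + 1)) ^ 2 + 1) / 2 : ℝ) * hkk
    have hcont : Continuous (fun y => (Real.sinh (k₀ * (y + 1))) ^ 2) := hsc.pow 2
    have hFTC := intervalIntegral.integral_eq_sub_of_hasDerivAt (f := fun t =>
        Real.sinh (k₀ * (t + 1)) * Real.cosh (k₀ * (t + 1)) / (2 * k₀) - t / 2)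
      (fun y _ => anti y) (hcont.intervalIntegrable (-1) 0)
    rw [intervalIntegral.integral_of_le hle,
      MeasureTheory.integral_Ioc_eq_integral_Ioo] at hFTC
    rw [hFTC]
    norm_num
    rw [Real.tanh_eq_sinh_div_cosh] at hroot
    have hcosh : Real.cosh k₀ ≠ 0 := (Real.cosh_pos k₀).ne'
    field_simp [hν.ne'] at hroot ⊢
    linear_combination (-Real.sinh k₀) * hroot
  -- replace deriv by derivWithin in the goal integrals
  have hI : ∫ y in Ioo (-1 : ℝ) 0, (deriv f y) ^ 2 = ∫ y in Ioo (-1 : ℝ) 0, g y ^ 2 :=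
    setIntegral_congr_fun measurableSet_Ioo fun y hy => by rw [hgd y hy]
  have hInn : 0 ≤ ∫ y in Ioo (-1 : ℝ) 0, (deriv f y) ^ 2 :=
    setIntegral_nonneg measurableSet_Ioo fun y _ => sq_nonneg _
  -- Cauchy–Schwarz
  have hcs := cs_aux (Ioo (-1 : ℝ) 0) measurableSet_Ioo g
    (fun y => Real.sinh (k₀ * (y + 1))) hintg2 hints2 hint1
  have first : (f 0) ^ 2 * (Real.sinh k₀) ^ 2
      ≤ (1 / 2) * ((Real.sinh k₀) ^ 2 / ν - 1) * ∫ y in Ioo (-1 : ℝ) 0, (deriv f y) ^ 2 := by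
    have h1 : (f 0) ^ 2 * (Real.sinh k₀) ^ 2 = (f 0 * Real.sinh k₀) ^ 2 := by ring
    rw [h1, key, hI, hS] at *
    calc (∫ y in Ioo (-1 : ℝ) 0, g y * Real.sinh (k₀ * (y + 1))) ^ 2
        ≤ (∫ y in Ioo (-1 : ℝ) 0, g y ^ 2) * ((1 / 2) * ((Real.sinh k₀) ^ 2 / ν - 1)) := hcs
      _ = (1 / 2) * ((Real.sinh k₀) ^ 2 / ν - 1) * ∫ y in Ioo (-1 : ℝ) 0, g y ^ 2 := by ring
  refine ⟨first, ?_⟩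
  set I := ∫ y in Ioo (-1 : ℝ) 0, (deriv f y) ^ 2 with hIdef
  have hsq : 0 < (Real.sinh k₀) ^ 2 := by positivity
  have h2 : ν * (f 0) ^ 2 * (Real.sinh k₀) ^ 2 ≤ (1 / 2) * I * (Real.sinh k₀) ^ 2 := by
    have hmul := mul_le_mul_of_nonneg_left first hν.le
    have heq : ν * ((1 / 2) * ((Real.sinh k₀) ^ 2 / ν - 1) * I)
        = (1 / 2) * I * (Real.sinh k₀) ^ 2 - (ν / 2) * I := by
      field_simp
    have hνI : 0 ≤ (ν / 2) * I := by positivity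
    nlinarith [hmul]
  have := le_of_mul_le_mul_right (by linarith : ν * (f 0) ^ 2 * (Real.sinh k₀) ^ 2
      ≤ (1 / 2) * I * (Real.sinh k₀) ^ 2) hsq
  linarith
end
end

section
/- Let α ∈ (0, π/2), ν > 0, and let k₀ > 0 satisfy k₀ tanh k₀ = ν. Suppose φ : ℝ³ → ℝ is continuously differentiable on an open neighborhood of the closure of W₁^(α) and satisfies ∫_{−1}^{0} φ(x, y) cosh(k₀(y + 1)) dy = 0 for every x ∈ F^(α). Then ν ∫_{F^(α)} |φ(x, 0)|² dx ≤ (1/2) ∫_{W₁^(α)} |∂φ/∂y(x, y)|² dx dy, and consequently ν ∫_{F^(α)} |φ(x, 0)|² dx ≤ (1/2) ∫_{W₁^(α)} |∇φ|² dx dy. -/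
open MeasureTheory Real Set
open scoped ENNReal

noncomputable section

lemma oneD {k₀ ν : ℝ} (hk₀ : 0 < k₀) (hroot : k₀ * Real.tanh k₀ = ν)
    {u : ℝ → ℝ} {V : Set ℝ} (hV : IsOpen V) (hIV : Icc (-1:ℝ) 0 ⊆ V)
    (hu : ContDiffOn ℝ 1 u V)
    (h0 : ∫ y in Ioo (-1:ℝ) 0, u y * Real.cosh (k₀ * (y + 1)) = 0) :
    ν * u 0 ^ 2 ≤ (1/2) * ∫ y in Ioo (-1:ℝ) 0, (deriv u y)^2 := by
  have hd : ∀ y ∈ V, HasDerivAt u (deriv u y) y := fun y hy =>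
    (((hu.differentiableOn one_ne_zero).differentiableAt (hV.mem_nhds hy))).hasDerivAt
  have hderivC : ContinuousOn (deriv u) V := hu.continuousOn_deriv_of_isOpen hV le_rfl
  have hlin : ∀ y : ℝ, HasDerivAt (fun y => k₀ * (y + 1)) k₀ y := fun y => by
    simpa using ((hasDerivAt_id y).add_const 1).const_mul k₀
  have hsinh : ∀ y : ℝ, HasDerivAt (fun y => Real.sinh (k₀ * (y + 1)))
      (k₀ * Real.cosh (k₀ * (y + 1))) y := fun y => by
    exact ((Real.hasDerivAt_sinh (k₀ * (y + 1))).comp y (hlin y)).congr_deriv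
      (by ring : Real.cosh (k₀ * (y + 1)) * k₀ = k₀ * Real.cosh (k₀ * (y + 1)))
  have hIcc : uIcc (-1:ℝ) 0 = Icc (-1:ℝ) 0 := uIcc_of_le (by norm_num)
  have hIoo : ∀ f : ℝ → ℝ, ∫ x in (-1:ℝ)..0, f x = ∫ x in Ioo (-1:ℝ) 0, f x := fun f => by
    rw [intervalIntegral.integral_of_le (by norm_num), MeasureTheory.integral_Ioc_eq_integral_Ioo]
  have hcontd : ContinuousOn (deriv u) (Icc (-1:ℝ) 0) := hderivC.mono hIV
  have hscont : Continuous (fun y : ℝ => Real.sinh (k₀ * (y + 1))) :=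
    Real.continuous_sinh.comp (by continuity)
  -- integrability
  have hiA : IntegrableOn (fun y => (deriv u y)^2) (Ioo (-1:ℝ) 0) :=
    ((hcontd.pow 2).integrableOn_Icc).mono_set Ioo_subset_Icc_self
  have hiD : IntegrableOn (fun y => deriv u y * Real.sinh (k₀ * (y + 1))) (Ioo (-1:ℝ) 0) :=
    ((hcontd.mul hscont.continuousOn).integrableOn_Icc).mono_set Ioo_subset_Icc_self
  have hiB : IntegrableOn (fun y => Real.sinh (k₀ * (y + 1))^2) (Ioo (-1:ℝ) 0) :=
    ((hscont.pow 2).continuousOn.integrableOn_Icc).mono_set Ioo_subset_Icc_self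
  set A := ∫ y in Ioo (-1:ℝ) 0, (deriv u y)^2 with hAdef
  set D := ∫ y in Ioo (-1:ℝ) 0, deriv u y * Real.sinh (k₀ * (y + 1)) with hDdef
  set B := ∫ y in Ioo (-1:ℝ) 0, Real.sinh (k₀ * (y + 1))^2 with hBdef
  clear_value A D B
  -- integration by parts
  have ibp := intervalIntegral.integral_mul_deriv_eq_deriv_mul
    (u := u) (v := fun y => Real.sinh (k₀ * (y + 1))) (u' := deriv u)
    (v' := fun y => k₀ * Real.cosh (k₀ * (y + 1))) (a := -1) (b := 0)
    (fun x hx => hd x (hIV (hIcc ▸ hx)))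
    (fun x _ => hsinh x)
    ((hderivC.mono (hIcc ▸ hIV : uIcc (-1:ℝ) 0 ⊆ V)).intervalIntegrable)
    (continuous_const.mul (Real.continuous_cosh.comp (by continuity))).continuousOn.intervalIntegrable
  have hlhs : ∫ x in (-1:ℝ)..0, u x * (k₀ * Real.cosh (k₀ * (x + 1))) = 0 := by
    have : (fun x => u x * (k₀ * Real.cosh (k₀ * (x + 1))))
        = fun x => k₀ * (u x * Real.cosh (k₀ * (x + 1))) := by ext x; ring
    rw [this, intervalIntegral.integral_const_mul, hIoo, h0, mul_zero]
  rw [hlhs, hIoo] at ibp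
  have hDval : D = u 0 * Real.sinh k₀ := by
    have h1 : Real.sinh (k₀ * ((0:ℝ) + 1)) = Real.sinh k₀ := by norm_num
    have h2 : Real.sinh (k₀ * ((-1:ℝ) + 1)) = 0 := by norm_num
    beta_reduce at ibp
    rw [h1, h2] at ibp
    rw [hDdef]; linarith [ibp]
  -- compute B
  have hFder : ∀ y : ℝ, HasDerivAt
      (fun y => (Real.sinh (k₀*(y+1)) * Real.cosh (k₀*(y+1)) - k₀*(y+1)) / (2*k₀))
      (Real.sinh (k₀*(y+1))^2) y := by
    intro y
    have h1 := hlin y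
    have hs := (Real.hasDerivAt_sinh (k₀*(y+1))).comp y h1
    have hc := (Real.hasDerivAt_cosh (k₀*(y+1))).comp y h1
    have h2 := ((hs.mul hc).sub h1).div_const (2*k₀)
    refine h2.congr_deriv ?_
    have hcs := Real.cosh_sq (k₀*(y+1))
    simp only [Function.comp_apply]
    rw [div_eq_iff (by positivity : (2*k₀) ≠ (0:ℝ))]
    linear_combination k₀ * hcs
  have hBval : B = (Real.sinh k₀ * Real.cosh k₀ - k₀) / (2*k₀) := by
    rw [hBdef, ← hIoo,
      intervalIntegral.integral_eq_sub_of_hasDerivAt (fun y _ => hFder y)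
        ((hscont.pow 2).continuousOn.intervalIntegrable)]
    norm_num
  -- quadratic / Cauchy–Schwarz
  have hA : 0 ≤ A := by
    rw [hAdef]; exact setIntegral_nonneg measurableSet_Ioo (fun y _ => sq_nonneg _)
  have key : ∀ t : ℝ, 0 ≤ B * (t*t) + (2*D) * t + A := by
    intro t
    have h0' : 0 ≤ ∫ y in Ioo (-1:ℝ) 0, (deriv u y + t * Real.sinh (k₀*(y+1)))^2 :=
      setIntegral_nonneg measurableSet_Ioo (fun y _ => sq_nonneg _)
    have heq : ∫ y in Ioo (-1:ℝ) 0, (deriv u y + t * Real.sinh (k₀*(y+1)))^2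
        = B * (t*t) + (2*D) * t + A := by
      have hfun : (fun y => (deriv u y + t * Real.sinh (k₀*(y+1)))^2)
          = fun y => (t*t) * Real.sinh (k₀*(y+1))^2
            + ((2*t) * (deriv u y * Real.sinh (k₀*(y+1))) + (deriv u y)^2) := by
        ext y; ring
      have hiB' : Integrable (fun y => (t*t) * Real.sinh (k₀*(y+1))^2)
          (volume.restrict (Ioo (-1:ℝ) 0)) := hiB.const_mul _
      have hiD' : Integrable (fun y => (2*t) * (deriv u y * Real.sinh (k₀*(y+1))))
          (volume.restrict (Ioo (-1:ℝ) 0)) := hiD.const_mul _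
      have hiA' : Integrable (fun y => (deriv u y)^2)
          (volume.restrict (Ioo (-1:ℝ) 0)) := hiA
      have hsum : Integrable
          (fun y => (2*t) * (deriv u y * Real.sinh (k₀*(y+1))) + (deriv u y)^2)
          (volume.restrict (Ioo (-1:ℝ) 0)) := hiD'.add hiA'
      rw [hfun, integral_add hiB' hsum, integral_add hiD' hiA',
        integral_const_mul, integral_const_mul, hBdef, hDdef, hAdef]
      ring
    linarith [heq ▸ h0']
  have hdisc := discrim_le_zero key
  rw [discrim] at hdisc
  have hD2 : D^2 ≤ B * A := by nlinarith [hdisc]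
  -- final algebra
  have hs0 : 0 < Real.sinh k₀ := Real.sinh_pos_iff.2 hk₀
  have hc0 : 0 < Real.cosh k₀ := Real.cosh_pos k₀
  have hνc : ν * Real.cosh k₀ = k₀ * Real.sinh k₀ := by
    rw [← hroot, Real.tanh_eq_sinh_div_cosh]; field_simp
  have h1 : u 0 ^ 2 * Real.sinh k₀ ^ 2 = D ^ 2 := by rw [hDval]; ring
  have hD2' : D^2 ≤ (Real.sinh k₀ * Real.cosh k₀ - k₀) / (2*k₀) * A := by
    rw [← hBval]; exact hD2
  have hmul : ν * u 0 ^ 2 * (2 * k₀ * Real.sinh k₀ ^ 2 * Real.cosh k₀)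
      ≤ (1/2 * A) * (2 * k₀ * Real.sinh k₀ ^ 2 * Real.cosh k₀) := by
    have e1 : ν * u 0 ^ 2 * (2 * k₀ * Real.sinh k₀ ^ 2 * Real.cosh k₀)
        = 2 * k₀ * (ν * Real.cosh k₀) * (u 0 ^ 2 * Real.sinh k₀ ^ 2) := by ring
    rw [e1, hνc, h1]
    have e2 : 2 * k₀ * (k₀ * Real.sinh k₀) * ((Real.sinh k₀ * Real.cosh k₀ - k₀) / (2*k₀) * A)
        = k₀ * Real.sinh k₀ * (Real.sinh k₀ * Real.cosh k₀ - k₀) * A := by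
      field_simp
    have e3 : 2 * k₀ * (k₀ * Real.sinh k₀) * D^2
        ≤ 2 * k₀ * (k₀ * Real.sinh k₀) * ((Real.sinh k₀ * Real.cosh k₀ - k₀) / (2*k₀) * A) :=
      mul_le_mul_of_nonneg_left hD2'
        (mul_nonneg (mul_nonneg (by norm_num : (0:ℝ) ≤ 2) hk₀.le)
          (mul_nonneg hk₀.le hs0.le))
    rw [e2] at e3
    have haux : k₀ * Real.sinh k₀ * (Real.sinh k₀ * Real.cosh k₀ - k₀) * A
        ≤ 1/2 * A * (2 * k₀ * Real.sinh k₀ ^ 2 * Real.cosh k₀) := by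
      nlinarith [mul_nonneg (mul_nonneg (mul_nonneg hk₀.le hk₀.le) hs0.le) hA]
    linarith
  exact le_of_mul_le_mul_right hmul
    (mul_pos (mul_pos (by linarith : (0:ℝ) < 2 * k₀) (pow_pos hs0 2)) hc0)


/-- if John's auxiliary function of `φ` vanishes on `F^(α)`, then
`ν ∫_{F^(α)} |φ(x,0)|² dx ≤ (1/2) ∫_{W₁^(α)} |∂φ/∂y|²`, and consequently
`ν ∫_{F^(α)} |φ(x,0)|² dx ≤ (1/2) ∫_{W₁^(α)} |∇φ|²`. -/
theorem free_surface_trace_bound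
    (α : ℝ) (hα : α ∈ Ioo 0 (π / 2)) (ν k₀ : ℝ) (hν : 0 < ν) (hk₀ : 0 < k₀)
    (hroot : k₀ * Real.tanh k₀ = ν)
    (φ : (ℝ × ℝ) × ℝ → ℝ)
    (hsmooth : ∃ U : Set ((ℝ × ℝ) × ℝ), IsOpen U ∧ closure (W1 α) ⊆ U ∧ ContDiffOn ℝ 1 φ U)
    (hw0 : ∀ x ∈ Fsec α, ∫ y in Ioo (-1 : ℝ) 0, φ (x, y) * Real.cosh (k₀ * (y + 1)) = 0) :
    ENNReal.ofReal ν * ∫⁻ x in Fsec α, ENNReal.ofReal ((φ (x, 0)) ^ 2)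
      ≤ (1 / 2 : ℝ≥0∞) * ∫⁻ p in W1 α, ENNReal.ofReal ((dY φ p) ^ 2) ∧
    ENNReal.ofReal ν * ∫⁻ x in Fsec α, ENNReal.ofReal ((φ (x, 0)) ^ 2)
      ≤ (1 / 2 : ℝ≥0∞) * ∫⁻ p in W1 α, ENNReal.ofReal (gradSq φ p) := by
  obtain ⟨U, hUopen, hUsub, hφ⟩ := hsmooth
  have hclW1 : closure (W1 α) = closure (Fsec α) ×ˢ Icc (-1:ℝ) 0 := by
    rw [W1, closure_prod_eq, closure_Ioo (by norm_num : (-1:ℝ) ≠ 0)]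
  have hsubU : ∀ x ∈ Fsec α, ∀ y ∈ Icc (-1:ℝ) 0, (x, y) ∈ U := fun x hx y hy =>
    hUsub (hclW1 ▸ mem_prod.2 ⟨subset_closure hx, hy⟩)
  have hW1U : W1 α ⊆ U := fun p hp =>
    hsubU p.1 hp.1 p.2 (Ioo_subset_Icc_self hp.2)
  have hFopen : IsOpen (Fsec α) :=
    isOpen_lt (continuous_fst.abs.neg.mul continuous_const) continuous_snd
  have hFmeas : MeasurableSet (Fsec α) := hFopen.measurableSet
  have hW1meas : MeasurableSet (W1 α) := hFmeas.prod measurableSet_Ioo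
  have hdiff : ∀ p ∈ U, DifferentiableAt ℝ φ p := fun p hp =>
    (hφ.differentiableOn one_ne_zero).differentiableAt (hUopen.mem_nhds hp)
  set g : ((ℝ×ℝ)×ℝ) → ℝ := fun p => fderiv ℝ φ p ((0:ℝ×ℝ), (1:ℝ)) with hgdef
  have hdYg : ∀ p ∈ U, dY φ p = g p := by
    intro p hp
    have hline : HasDerivAt (fun t : ℝ => ((p.1 : ℝ×ℝ), t)) ((0:ℝ×ℝ), (1:ℝ)) p.2 :=
      (hasDerivAt_const _ _).prodMk (hasDerivAt_id _)
    have h1 : HasDerivAt (fun t => φ (p.1, t)) (fderiv ℝ φ p ((0:ℝ×ℝ), (1:ℝ))) p.2 :=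
      (hdiff p hp).hasFDerivAt.comp_hasDerivAt p.2 hline
    exact h1.deriv
  have hgcont : ContinuousOn g U :=
    (hφ.continuousOn_fderiv_of_isOpen hUopen le_rfl).clm_apply continuousOn_const
  have hinner : ∀ x ∈ Fsec α,
      ENNReal.ofReal ν * ENNReal.ofReal ((φ (x, 0))^2)
        ≤ (1/2 : ℝ≥0∞) * ∫⁻ y in Ioo (-1:ℝ) 0, ENNReal.ofReal ((g (x, y))^2) := by
    intro x hx
    set u : ℝ → ℝ := fun y => φ (x, y) with hudef
    set V : Set ℝ := {y | (x, y) ∈ U} with hVdef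
    have hVopen : IsOpen V := hUopen.preimage (Continuous.prodMk_right x)
    have hIV : Icc (-1:ℝ) 0 ⊆ V := fun y hy => hsubU x hx y hy
    have huC : ContDiffOn ℝ 1 u V :=
      hφ.comp ((contDiff_const.prodMk contDiff_id).contDiffOn) (fun y hy => hy)
    have h1d := oneD hk₀ hroot hVopen hIV huC (hw0 x hx)
    have hgu : ∀ y ∈ Ioo (-1:ℝ) 0, g (x, y) = deriv u y := fun y hy =>
      (hdYg (x, y) (hIV (Ioo_subset_Icc_self hy))).symm
    have hderC : ContinuousOn (deriv u) V := huC.continuousOn_deriv_of_isOpen hVopen le_rfl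
    have hint : IntegrableOn (fun y => (deriv u y)^2) (Ioo (-1:ℝ) 0) :=
      (((hderC.mono hIV).pow 2).integrableOn_Icc).mono_set Ioo_subset_Icc_self
    have hlint : ∫⁻ y in Ioo (-1:ℝ) 0, ENNReal.ofReal ((g (x, y))^2)
        = ENNReal.ofReal (∫ y in Ioo (-1:ℝ) 0, (deriv u y)^2) := by
      rw [setLIntegral_congr_fun measurableSet_Ioo
        (fun y hy => by rw [hgu y hy])]
      exact (ofReal_integral_eq_lintegral_ofReal hint
        (ae_of_all _ fun y => sq_nonneg _)).symm
    rw [hlint, ← ENNReal.ofReal_mul hν.le]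
    have hhalf : (1/2 : ℝ≥0∞) = ENNReal.ofReal (1/2 : ℝ) := by
      rw [ENNReal.ofReal_div_of_pos (by norm_num)]; norm_num
    rw [hhalf, ← ENNReal.ofReal_mul (by norm_num : (0:ℝ) ≤ 1/2)]
    exact ENNReal.ofReal_le_ofReal h1d
  have hres : (volume : Measure ((ℝ×ℝ)×ℝ)).restrict (W1 α)
      = ((volume : Measure (ℝ×ℝ)).restrict (Fsec α)).prod
          ((volume : Measure ℝ).restrict (Ioo (-1:ℝ) 0)) := by
    rw [Measure.prod_restrict, W1, Measure.volume_eq_prod (ℝ×ℝ) ℝ]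
  have hGaem : AEMeasurable (fun p : (ℝ×ℝ)×ℝ => ENNReal.ofReal ((g p)^2))
      (((volume : Measure (ℝ×ℝ)).restrict (Fsec α)).prod
          ((volume : Measure ℝ).restrict (Ioo (-1:ℝ) 0))) := by
    rw [← hres]
    exact (ENNReal.continuous_ofReal.comp_continuousOn
      ((hgcont.mono hW1U).pow 2)).aemeasurable hW1meas
  have hprod : ∫⁻ p in W1 α, ENNReal.ofReal ((dY φ p)^2)
      = ∫⁻ x in Fsec α, ∫⁻ y in Ioo (-1:ℝ) 0, ENNReal.ofReal ((g (x, y))^2) := by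
    rw [setLIntegral_congr_fun hW1meas
      (fun p hp => by rw [hdYg p (hW1U hp)]), hres,
      lintegral_prod _ hGaem]
  have bound1 : ENNReal.ofReal ν * ∫⁻ x in Fsec α, ENNReal.ofReal ((φ (x, 0))^2)
      ≤ (1/2 : ℝ≥0∞) * ∫⁻ p in W1 α, ENNReal.ofReal ((dY φ p)^2) := by
    rw [hprod, ← lintegral_const_mul' _ _ ENNReal.ofReal_ne_top,
      ← lintegral_const_mul' _ _ (by norm_num : (1/2:ℝ≥0∞) ≠ ⊤)]
    exact lintegral_mono_ae ((ae_restrict_iff' hFmeas).2 (ae_of_all _ fun x hx => hinner x hx))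
  refine ⟨bound1, bound1.trans (mul_le_mul_right (lintegral_mono fun p => ?_) _)⟩
  apply ENNReal.ofReal_le_ofReal
  have h1 := sq_nonneg (deriv (fun t => φ ((t, p.1.2), p.2)) p.1.1)
  have h2 := sq_nonneg (deriv (fun t => φ ((p.1.1, t), p.2)) p.1.2)
  unfold dY gradSq
  linarith
end
end

section
/- Let α ∈ (0, π/2), ν > 0, and let k > 0 satisfy ν + k tan k = 0. Suppose φ : ℝ³ → ℝ is twice continuously differentiable on an open neighborhood of the closure of the layer W₁^(α), harmonic in W₁^(α) (Δφ = 0 there), and satisfies ∂φ/∂y(x, 0) = ν φ(x, 0) and ∂φ/∂y(x, −1) = 0 for every x ∈ F^(α). Then the function u(x) = ∫_{−1}^{0} φ(x, y) cos(k(y + 1)) dy satisfies the modified Helmholtz equation Δ_x u − k² u = 0 in F^(α), where Δ_x is the two-dimensional Laplacian in the variable x = (x₁, x₂). -/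
open MeasureTheory Real Set

noncomputable section

open Metric

section AuxHelmholtz

lemma param_deriv (G G' : ℝ → ℝ → ℝ) (V : Set (ℝ × ℝ)) (hV : IsOpen V)
    (hG : ContinuousOn (fun p : ℝ × ℝ => G p.1 p.2) V)
    (hG' : ContinuousOn (fun p : ℝ × ℝ => G' p.1 p.2) V)
    (hd : ∀ p ∈ V, HasDerivAt (fun t => G t p.2) (G' p.1 p.2) p.1)
    (t₀ : ℝ) (ht : ∀ y ∈ Icc (-1:ℝ) 0, (t₀, y) ∈ V) :
    HasDerivAt (fun t => ∫ y in Ioo (-1:ℝ) 0, G t y) (∫ y in Ioo (-1:ℝ) 0, G' t₀ y) t₀ := by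
  have hK : IsCompact (({t₀} : Set ℝ) ×ˢ Icc (-1:ℝ) 0) :=
    isCompact_singleton.prod isCompact_Icc
  obtain ⟨δ, hδ, hthick⟩ := hK.exists_thickening_subset_open hV
    (by rintro ⟨t, y⟩ ⟨rfl, hy⟩; exact ht _ hy)
  have htube : ∀ t ∈ closedBall t₀ (δ/2), ∀ y ∈ Icc (-1:ℝ) 0, (t, y) ∈ V := by
    intro t htb y hy
    apply hthick
    rw [Metric.mem_thickening_iff]
    refine ⟨(t₀, y), ⟨rfl, hy⟩, ?_⟩
    rw [Prod.dist_eq]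
    simp only [dist_self]
    have : dist t t₀ ≤ δ/2 := mem_closedBall.1 htb
    calc max (dist t t₀) 0 ≤ δ/2 := max_le this (by linarith)
      _ < δ := by linarith
  have hKc : IsCompact ((closedBall t₀ (δ/2)) ×ˢ Icc (-1:ℝ) 0) :=
    (isCompact_closedBall _ _).prod isCompact_Icc
  obtain ⟨C, hC⟩ := hKc.exists_bound_of_continuousOn
    (hG'.mono (by rintro ⟨t, y⟩ ⟨htb, hy⟩; exact htube t htb y hy))
  have key := hasDerivAt_integral_of_dominated_loc_of_deriv_le
    (μ := volume.restrict (Ioo (-1:ℝ) 0)) (F := G) (F' := G')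
    (x₀ := t₀) (bound := fun _ => C) (Metric.ball_mem_nhds t₀ (half_pos hδ))
    ?_ ?_ ?_ ?_ ?_ ?_
  · exact key.2
  · filter_upwards [Metric.ball_mem_nhds t₀ (half_pos hδ)] with t htb
    have : ContinuousOn (fun y => G t y) (Icc (-1:ℝ) 0) := by
      have hc : ContinuousOn (fun y => ((t : ℝ), y)) (Icc (-1:ℝ) 0) :=
        (continuous_const.prodMk continuous_id).continuousOn
      exact hG.comp hc fun y hy => htube t (ball_subset_closedBall htb) y hy
    exact (this.mono Ioo_subset_Icc_self).aestronglyMeasurable measurableSet_Ioo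
  · have : ContinuousOn (fun y => G t₀ y) (Icc (-1:ℝ) 0) := by
      have hc : ContinuousOn (fun y => ((t₀ : ℝ), y)) (Icc (-1:ℝ) 0) :=
        (continuous_const.prodMk continuous_id).continuousOn
      exact hG.comp hc fun y hy => ht y hy
    exact (this.integrableOn_Icc).mono_set Ioo_subset_Icc_self
  · have : ContinuousOn (fun y => G' t₀ y) (Icc (-1:ℝ) 0) := by
      have hc : ContinuousOn (fun y => ((t₀ : ℝ), y)) (Icc (-1:ℝ) 0) :=
        (continuous_const.prodMk continuous_id).continuousOn
      exact hG'.comp hc fun y hy => ht y hy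
    exact ((this.mono Ioo_subset_Icc_self).aestronglyMeasurable measurableSet_Ioo)
  · apply ae_restrict_of_forall_mem measurableSet_Ioo
    intro y hy t htb
    rw [Real.norm_eq_abs]
    exact hC (t, y) ⟨ball_subset_closedBall htb, Ioo_subset_Icc_self hy⟩
  · exact integrableOn_const measure_Ioo_lt_top.ne
  · apply ae_restrict_of_forall_mem measurableSet_Ioo
    intro y hy t htb
    exact hd (t, y) (htube t (ball_subset_closedBall htb) y (Ioo_subset_Icc_self hy))

lemma param_deriv2 (G G' G'' : ℝ → ℝ → ℝ) (V : Set (ℝ × ℝ)) (hV : IsOpen V)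
    (hG : ContinuousOn (fun p : ℝ × ℝ => G p.1 p.2) V)
    (hG' : ContinuousOn (fun p : ℝ × ℝ => G' p.1 p.2) V)
    (hG'' : ContinuousOn (fun p : ℝ × ℝ => G'' p.1 p.2) V)
    (hd : ∀ p ∈ V, HasDerivAt (fun t => G t p.2) (G' p.1 p.2) p.1)
    (hd' : ∀ p ∈ V, HasDerivAt (fun t => G' t p.2) (G'' p.1 p.2) p.1)
    (t₀ δ : ℝ) (hδ : 0 < δ)
    (ht : ∀ t ∈ ball t₀ δ, ∀ y ∈ Icc (-1:ℝ) 0, (t, y) ∈ V) :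
    deriv (deriv (fun t => ∫ y in Ioo (-1:ℝ) 0, G t y)) t₀
      = ∫ y in Ioo (-1:ℝ) 0, G'' t₀ y := by
  have h1 : ∀ t ∈ ball t₀ δ,
      HasDerivAt (fun s => ∫ y in Ioo (-1:ℝ) 0, G s y) (∫ y in Ioo (-1:ℝ) 0, G' t y) t :=
    fun t htb => param_deriv G G' V hV hG hG' hd t (ht t htb)
  have heq : deriv (fun t => ∫ y in Ioo (-1:ℝ) 0, G t y)
      =ᶠ[nhds t₀] fun t => ∫ y in Ioo (-1:ℝ) 0, G' t y := by
    filter_upwards [ball_mem_nhds t₀ hδ] with t htb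
    exact (h1 t htb).deriv
  rw [heq.deriv_eq]
  exact (param_deriv G' G'' V hV hG' hG'' hd' t₀ (ht t₀ (mem_ball_self hδ))).deriv

abbrev E3 := (ℝ × ℝ) × ℝ

def gD (φ : E3 → ℝ) (v : E3) (p : E3) : ℝ := fderiv ℝ φ p v
def hD (φ : E3 → ℝ) (v w : E3) (p : E3) : ℝ := fderiv ℝ (fderiv ℝ φ) p v w

variable {φ : E3 → ℝ} {U : Set E3}

lemma cont_gD (hU : IsOpen U) (hφ : ContDiffOn ℝ 2 φ U) (v : E3) :
    ContinuousOn (gD φ v) U :=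
  (hφ.continuousOn_fderiv_of_isOpen hU (by norm_num)).clm_apply continuousOn_const

lemma fderiv_diffOn (hU : IsOpen U) (hφ : ContDiffOn ℝ 2 φ U) :
    DifferentiableOn ℝ (fderiv ℝ φ) U := by
  have := hφ.fderiv_of_isOpen (m := 1) hU (by norm_num)
  exact ContDiffOn.differentiableOn (by exact_mod_cast this) (by norm_num)

lemma cont_hD (hU : IsOpen U) (hφ : ContDiffOn ℝ 2 φ U) (v w : E3) :
    ContinuousOn (hD φ v w) U := by
  have h2 : ContinuousOn (fderiv ℝ (fderiv ℝ φ)) U := by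
    have := hφ.fderiv_of_isOpen (m := 1) hU (by norm_num)
    exact ContDiffOn.continuousOn_fderiv_of_isOpen (by exact_mod_cast this) hU (by norm_num)
  exact (h2.clm_apply continuousOn_const).clm_apply continuousOn_const

lemma hasDerivAt_comp_gD (hU : IsOpen U) (hφ : ContDiffOn ℝ 2 φ U)
    {L : ℝ → E3} {v : E3} {t : ℝ} (hL : HasDerivAt L v t) (hp : L t ∈ U) :
    HasDerivAt (fun s => φ (L s)) (gD φ v (L t)) t := by
  have hd : DifferentiableAt ℝ φ (L t) :=
    (hφ.differentiableOn (by norm_num)).differentiableAt (hU.mem_nhds hp)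
  exact hd.hasFDerivAt.comp_hasDerivAt t hL

lemma hasDerivAt_comp_hD (hU : IsOpen U) (hφ : ContDiffOn ℝ 2 φ U)
    {L : ℝ → E3} {v : E3} {t : ℝ} (hL : HasDerivAt L v t) (hp : L t ∈ U) (w : E3) :
    HasDerivAt (fun s => gD φ w (L s)) (hD φ v w (L t)) t := by
  have hd : DifferentiableAt ℝ (fderiv ℝ φ) (L t) :=
    (fderiv_diffOn hU hφ).differentiableAt (hU.mem_nhds hp)
  have h1 : HasDerivAt (fun s => fderiv ℝ φ (L s)) (fderiv ℝ (fderiv ℝ φ) (L t) v) t :=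
    hd.hasFDerivAt.comp_hasDerivAt t hL
  have := h1.clm_apply (hasDerivAt_const t w)
  simpa [gD, hD] using this

lemma hasDerivAt_L1 (a b t : ℝ) :
    HasDerivAt (fun s : ℝ => (((s, a), b) : E3)) (((1,0),0) : E3) t :=
  ((hasDerivAt_id t).prodMk (hasDerivAt_const t a)).prodMk (hasDerivAt_const t b)

lemma hasDerivAt_L2 (a b t : ℝ) :
    HasDerivAt (fun s : ℝ => (((a, s), b) : E3)) (((0,1),0) : E3) t :=
  (((hasDerivAt_const t a).prodMk (hasDerivAt_id t))).prodMk (hasDerivAt_const t b)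

lemma hasDerivAt_L3 (x : ℝ × ℝ) (t : ℝ) :
    HasDerivAt (fun s : ℝ => ((x, s) : E3)) (((0,0),1) : E3) t := by
  have := (hasDerivAt_const t x).prodMk (hasDerivAt_id t)
  exact this

lemma deriv_deriv_line (hU : IsOpen U) (hφ : ContDiffOn ℝ 2 φ U)
    {L : ℝ → E3} {v : E3} (hL : ∀ s, HasDerivAt L v s) {t : ℝ} (hp : L t ∈ U) :
    deriv (deriv (fun s => φ (L s))) t = hD φ v v (L t) := by
  have hLc : Continuous L := by
    rw [continuous_iff_continuousAt]; exact fun s => (hL s).continuousAt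
  have hmem : ∀ᶠ s in nhds t, L s ∈ U := (hU.preimage hLc).mem_nhds hp
  have h1 : deriv (fun s => φ (L s)) =ᶠ[nhds t] fun s => gD φ v (L s) := by
    filter_upwards [hmem] with s hs
    exact (hasDerivAt_comp_gD hU hφ (hL s) hs).deriv
  rw [h1.deriv_eq]
  exact (hasDerivAt_comp_hD hU hφ (hL t) hp v).deriv

lemma lap3_eq_hD (hU : IsOpen U) (hφ : ContDiffOn ℝ 2 φ U) {p : E3} (hp : p ∈ U) :
    lap3 φ p
    = hD φ ((1,0),0) ((1,0),0) p + hD φ ((0,1),0) ((0,1),0) p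
      + hD φ ((0,0),1) ((0,0),1) p := by
  unfold lap3
  have e1 := deriv_deriv_line hU hφ (fun s => hasDerivAt_L1 p.1.2 p.2 s) (t := p.1.1)
    (by simpa using hp)
  have e2 := deriv_deriv_line hU hφ (fun s => hasDerivAt_L2 p.1.1 p.2 s) (t := p.1.2)
    (by simpa using hp)
  have e3 := deriv_deriv_line hU hφ (fun s => hasDerivAt_L3 p.1 s) (t := p.2)
    (by simpa using hp)
  simp only [e1, e2, e3]


end AuxHelmholtz

/-- if `ν + k tan k = 0` with `k > 0`, then the function
`u(x) = ∫_{-1}^0 φ(x,y) cos(k(y+1)) dy` satisfies the modified Helmholtz equation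
`Δₓu - k²u = 0` in `F^(α)`. -/
theorem aux_function_satisfies_modified_helmholtz
    (α : ℝ) (hα : α ∈ Ioo 0 (π / 2)) (ν k : ℝ) (hν : 0 < ν) (hk : 0 < k)
    (hroot : ν + k * Real.tan k = 0)
    (φ : (ℝ × ℝ) × ℝ → ℝ)
    (hsmooth : ∃ U : Set ((ℝ × ℝ) × ℝ), IsOpen U ∧ closure (W1 α) ⊆ U ∧ ContDiffOn ℝ 2 φ U)
    (hharm : ∀ p ∈ W1 α, lap3 φ p = 0)
    (hfs : ∀ x ∈ Fsec α, deriv (fun t => φ (x, t)) 0 = ν * φ (x, 0))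
    (hbot : ∀ x ∈ Fsec α, deriv (fun t => φ (x, t)) (-1) = 0) :
    ∀ x ∈ Fsec α,
      lap2 (fun x : ℝ × ℝ => ∫ y in Ioo (-1 : ℝ) 0, φ (x, y) * Real.cos (k * (y + 1))) x
        - k ^ 2 * (∫ y in Ioo (-1 : ℝ) 0, φ (x, y) * Real.cos (k * (y + 1))) = 0 := by
  obtain ⟨U, hUo, hUsub, hφU⟩ := hsmooth
  -- trigonometric root fact
  have hcos : Real.cos k ≠ 0 := by
    intro h
    rw [Real.tan_eq_sin_div_cos, h, div_zero, mul_zero, add_zero] at hroot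
    exact absurd hroot (ne_of_gt hν)
  have hkey : ν * Real.cos k + k * Real.sin k = 0 := by
    have := hroot
    rw [Real.tan_eq_sin_div_cos] at this
    field_simp at this
    nlinarith [this]
  intro x hx
  -- membership of the segment above x in U
  have hmemU : ∀ y ∈ Icc (-1:ℝ) 0, ((x, y) : E3) ∈ U := by
    intro y hy
    apply hUsub
    rw [W1, closure_prod_eq, closure_Ioo (by norm_num : (-1:ℝ) ≠ 0)]
    exact ⟨subset_closure hx, hy⟩
  -- tube around the segment
  have hK : IsCompact (({x} : Set (ℝ × ℝ)) ×ˢ Icc (-1:ℝ) 0) :=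
    isCompact_singleton.prod isCompact_Icc
  obtain ⟨δ, hδ, hthick⟩ := hK.exists_thickening_subset_open hUo
    (by rintro ⟨x', y⟩ ⟨rfl, hy⟩; exact hmemU _ hy)
  have htube : ∀ x' : ℝ × ℝ, dist x' x < δ → ∀ y ∈ Icc (-1:ℝ) 0, ((x', y) : E3) ∈ U := by
    intro x' hx' y hy
    apply hthick
    rw [Metric.mem_thickening_iff]
    refine ⟨(x, y), ⟨rfl, hy⟩, ?_⟩
    rw [Prod.dist_eq]
    simp only [dist_self]
    exact max_lt hx' hδ
  -- the partial derivative functions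
  set c : ℝ → ℝ := fun y => Real.cos (k * (y + 1)) with hc
  have hccont : Continuous c := by fun_prop
  -- generic integrability
  have hint : ∀ F : E3 → ℝ, ContinuousOn F U →
      IntegrableOn (fun y => F (x, y) * c y) (Ioo (-1:ℝ) 0) := by
    intro F hF
    have h1 : ContinuousOn (fun y => F (x, y) * c y) (Icc (-1:ℝ) 0) := by
      refine ContinuousOn.mul ?_ hccont.continuousOn
      exact hF.comp ((continuous_const.prodMk continuous_id).continuousOn) hmemU
    exact h1.integrableOn_Icc.mono_set Ioo_subset_Icc_self
  -- first direction second derivative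
  have hT1 : deriv (deriv (fun t => ∫ y in Ioo (-1:ℝ) 0, φ ((t, x.2), y) * c y)) x.1
      = ∫ y in Ioo (-1:ℝ) 0, hD φ ((1,0),0) ((1,0),0) (x, y) * c y := by
    have hVo : IsOpen ((fun p : ℝ × ℝ => (((p.1, x.2), p.2) : E3)) ⁻¹' U) :=
      hUo.preimage (by fun_prop)
    have hmap : ∀ F : E3 → ℝ, ContinuousOn F U → ContinuousOn
        (fun p : ℝ × ℝ => F ((p.1, x.2), p.2) * c p.2)
        ((fun p : ℝ × ℝ => (((p.1, x.2), p.2) : E3)) ⁻¹' U) := by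
      intro F hF
      refine ContinuousOn.mul ?_ (hccont.comp continuous_snd).continuousOn
      exact hF.comp (by fun_prop) (fun p hp => hp)
    have := param_deriv2
      (fun t y => φ ((t, x.2), y) * c y)
      (fun t y => gD φ ((1,0),0) ((t, x.2), y) * c y)
      (fun t y => hD φ ((1,0),0) ((1,0),0) ((t, x.2), y) * c y)
      _ hVo (hmap φ hφU.continuousOn) (hmap _ (cont_gD hUo hφU _)) (hmap _ (cont_hD hUo hφU _ _))
      (fun p hp => (hasDerivAt_comp_gD hUo hφU (hasDerivAt_L1 x.2 p.2 p.1) hp).mul_const _)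
      (fun p hp => (hasDerivAt_comp_hD hUo hφU (hasDerivAt_L1 x.2 p.2 p.1) hp _).mul_const _)
      x.1 δ hδ ?_
    · simpa using this
    · intro t htb y hy
      refine htube (t, x.2) ?_ y hy
      rw [Prod.dist_eq]; simp only [dist_self]
      exact max_lt (mem_ball.1 htb) hδ
  -- second direction
  have hT2 : deriv (deriv (fun t => ∫ y in Ioo (-1:ℝ) 0, φ ((x.1, t), y) * c y)) x.2
      = ∫ y in Ioo (-1:ℝ) 0, hD φ ((0,1),0) ((0,1),0) (x, y) * c y := by
    have hVo : IsOpen ((fun p : ℝ × ℝ => (((x.1, p.1), p.2) : E3)) ⁻¹' U) :=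
      hUo.preimage (by fun_prop)
    have hmap : ∀ F : E3 → ℝ, ContinuousOn F U → ContinuousOn
        (fun p : ℝ × ℝ => F ((x.1, p.1), p.2) * c p.2)
        ((fun p : ℝ × ℝ => (((x.1, p.1), p.2) : E3)) ⁻¹' U) := by
      intro F hF
      refine ContinuousOn.mul ?_ (hccont.comp continuous_snd).continuousOn
      exact hF.comp (by fun_prop) (fun p hp => hp)
    have := param_deriv2
      (fun t y => φ ((x.1, t), y) * c y)
      (fun t y => gD φ ((0,1),0) ((x.1, t), y) * c y)
      (fun t y => hD φ ((0,1),0) ((0,1),0) ((x.1, t), y) * c y)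
      _ hVo (hmap φ hφU.continuousOn) (hmap _ (cont_gD hUo hφU _)) (hmap _ (cont_hD hUo hφU _ _))
      (fun p hp => (hasDerivAt_comp_gD hUo hφU (hasDerivAt_L2 x.1 p.2 p.1) hp).mul_const _)
      (fun p hp => (hasDerivAt_comp_hD hUo hφU (hasDerivAt_L2 x.1 p.2 p.1) hp _).mul_const _)
      x.2 δ hδ ?_
    · simpa using this
    · intro t htb y hy
      refine htube (x.1, t) ?_ y hy
      rw [Prod.dist_eq]; simp only [dist_self]
      exact max_lt hδ (mem_ball.1 htb)
  -- boundary values of the vertical derivative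
  have hg0 : gD φ ((0,0),1) (x, 0) = ν * φ (x, 0) := by
    have h := (hasDerivAt_comp_gD hUo hφU (hasDerivAt_L3 x 0)
      (hmemU 0 ⟨by norm_num, le_refl 0⟩)).deriv
    rw [hfs x hx] at h
    exact h.symm
  have hgm1 : gD φ ((0,0),1) (x, -1) = 0 := by
    have h := (hasDerivAt_comp_gD hUo hφU (hasDerivAt_L3 x (-1))
      (hmemU (-1) ⟨le_refl _, by norm_num⟩)).deriv
    rw [hbot x hx] at h
    exact h.symm
  -- integration by parts for the vertical term
  have huIcc : uIcc (-1:ℝ) 0 = Icc (-1:ℝ) 0 := uIcc_of_le (by norm_num)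
  have hvJ : ∀ y ∈ uIcc (-1:ℝ) 0,
      HasDerivAt (fun s => gD φ ((0,0),1) (x, s)) (hD φ ((0,0),1) ((0,0),1) (x, y)) y := by
    intro y hy
    exact hasDerivAt_comp_hD hUo hφU (hasDerivAt_L3 x y) (hmemU y (huIcc ▸ hy)) _
  have hvφ : ∀ y ∈ uIcc (-1:ℝ) 0,
      HasDerivAt (fun s => φ (x, s)) (gD φ ((0,0),1) (x, y)) y := by
    intro y hy
    exact hasDerivAt_comp_gD hUo hφU (hasDerivAt_L3 x y) (hmemU y (huIcc ▸ hy))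
  have hcu : ∀ y : ℝ, HasDerivAt c (-(Real.sin (k*(y+1)) * k)) y := by
    intro y
    have hin : HasDerivAt (fun y : ℝ => k * (y + 1)) k y := by
      simpa using ((hasDerivAt_id y).add_const 1).const_mul k
    have h := (Real.hasDerivAt_cos (k*(y+1))).comp y hin; rw [neg_mul] at h; exact h
  have hsu : ∀ y : ℝ, HasDerivAt (fun y => Real.sin (k*(y+1))) (Real.cos (k*(y+1)) * k) y := by
    intro y
    have hin : HasDerivAt (fun y : ℝ => k * (y + 1)) k y := by
      simpa using ((hasDerivAt_id y).add_const 1).const_mul k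
    exact (Real.hasDerivAt_sin (k*(y+1))).comp y hin
  -- interval integrability of various integrands
  have hII : ∀ F : E3 → ℝ, ContinuousOn F U →
      IntervalIntegrable (fun y => F (x, y)) volume (-1:ℝ) 0 := by
    intro F hF
    rw [intervalIntegrable_iff_integrableOn_Icc_of_le (by norm_num : (-1:ℝ) ≤ 0)]
    exact (hF.comp ((continuous_const.prodMk continuous_id).continuousOn) hmemU).integrableOn_Icc
  -- interval version of the double vertical derivative integral
  have hIBP : (∫ y in (-1:ℝ)..0, c y * hD φ ((0,0),1) ((0,0),1) (x, y))
      = -(k^2) * ∫ y in (-1:ℝ)..0, φ (x, y) * c y := by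
    have h1 := intervalIntegral.integral_mul_deriv_eq_deriv_mul
      (u := c) (u' := fun y => -(Real.sin (k*(y+1)) * k))
      (v := fun y => gD φ ((0,0),1) (x, y)) (v' := fun y => hD φ ((0,0),1) ((0,0),1) (x, y))
      (fun y _ => hcu y) hvJ
      (Continuous.intervalIntegrable (by fun_prop) _ _)
      (by
        rw [intervalIntegrable_iff_integrableOn_Icc_of_le (by norm_num : (-1:ℝ) ≤ 0)]
        exact ((cont_hD hUo hφU _ _).comp
          ((continuous_const.prodMk continuous_id).continuousOn) hmemU).integrableOn_Icc)
    have h2 := intervalIntegral.integral_mul_deriv_eq_deriv_mul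
      (u := fun y => Real.sin (k*(y+1))) (u' := fun y => Real.cos (k*(y+1)) * k)
      (v := fun y => φ (x, y)) (v' := fun y => gD φ ((0,0),1) (x, y))
      (fun y _ => hsu y) hvφ
      (Continuous.intervalIntegrable (by fun_prop) _ _)
      (by
        rw [intervalIntegrable_iff_integrableOn_Icc_of_le (by norm_num : (-1:ℝ) ≤ 0)]
        exact ((cont_gD hUo hφU _).comp
          ((continuous_const.prodMk continuous_id).continuousOn) hmemU).integrableOn_Icc)
    have hc0 : c 0 = Real.cos k := by simp [hc]
    have hcm1 : c (-1) = 1 := by simp [hc]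
    have e2 : (∫ y in (-1:ℝ)..0, -(Real.sin (k*(y+1)) * k) * gD φ ((0,0),1) (x, y))
        = -k * ∫ y in (-1:ℝ)..0, Real.sin (k*(y+1)) * gD φ ((0,0),1) (x, y) := by
      rw [← intervalIntegral.integral_const_mul]
      congr 1; ext y; ring
    have e3 : (∫ y in (-1:ℝ)..0, Real.cos (k*(y+1)) * k * φ (x, y))
        = k * ∫ y in (-1:ℝ)..0, φ (x, y) * c y := by
      rw [← intervalIntegral.integral_const_mul]
      congr 1; ext y; simp only [hc]; ring
    rw [h1, hg0, hgm1, hc0, hcm1, e2, h2, e3]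
    have hs0 : Real.sin (k * (-1 + 1)) = 0 := by norm_num
    have hs1 : Real.sin (k * (0 + 1)) = Real.sin k := by norm_num
    rw [hs0, hs1]
    linear_combination φ (x, 0) * hkey
  -- convert the Ioo-integral of the vertical term
  have hIoo_eq : ∀ f : ℝ → ℝ, (∫ y in Ioo (-1:ℝ) 0, f y) = ∫ y in (-1:ℝ)..0, f y := by
    intro f
    rw [intervalIntegral.integral_of_le (by norm_num : (-1:ℝ) ≤ 0),
      MeasureTheory.integral_Ioc_eq_integral_Ioo]
  have hJ : (∫ y in Ioo (-1:ℝ) 0, hD φ ((0,0),1) ((0,0),1) (x, y) * c y)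
      = -(k^2) * ∫ y in Ioo (-1:ℝ) 0, φ (x, y) * c y := by
    rw [hIoo_eq, hIoo_eq]
    rw [← hIBP]
    congr 1; ext y; ring
  -- harmonicity: pointwise identity on the segment
  have hptwise : ∀ y ∈ Ioo (-1:ℝ) 0,
      hD φ ((1,0),0) ((1,0),0) (x, y) * c y + hD φ ((0,1),0) ((0,1),0) (x, y) * c y
        = -(hD φ ((0,0),1) ((0,0),1) (x, y) * c y) := by
    intro y hy
    have hmem : ((x, y) : E3) ∈ U := hmemU y (Ioo_subset_Icc_self hy)
    have h0 : lap3 φ (x, y) = 0 := hharm (x, y) ⟨hx, hy⟩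
    rw [lap3_eq_hD hUo hφU hmem] at h0
    linear_combination (c y) * h0
  -- assemble
  have hsum : (∫ y in Ioo (-1:ℝ) 0, hD φ ((1,0),0) ((1,0),0) (x, y) * c y)
      + (∫ y in Ioo (-1:ℝ) 0, hD φ ((0,1),0) ((0,1),0) (x, y) * c y)
      = -(∫ y in Ioo (-1:ℝ) 0, hD φ ((0,0),1) ((0,0),1) (x, y) * c y) := by
    rw [← integral_add (hint _ (cont_hD hUo hφU _ _)) (hint _ (cont_hD hUo hφU _ _)),
      ← integral_neg]
    exact setIntegral_congr_fun measurableSet_Ioo (fun y hy => hptwise y hy)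
  simp only [lap2]
  rw [hT1, hT2, hsum, hJ]
  ring
end
end
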